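/- Let d > 0 and let p(x) be a polynomial of degree d with h*-coefficients h*_0, …, h*_d defined by p(x) = Σ_{j=0}^{d} h*_j · C(x + d − j, d) (equivalently, Σ_{j≥0} p(j) x^j = (Σ h*_j x^j)/(1−x)^{d+1}). Then the coefficient of x in p(x−1) equals (−1)^{d−1} h*_d H_d + (1/d) Σ_{j=0}^{d−1} (−1)^j h*_j / C(d−1, j), where H_d is the d-th harmonic number. -/

import Mathlib

/-- The polynomial binomial coefficient `C(x + d - j, d) = (x+d-j)(x+d-j-1)⋯(x-j+1)/d!`. -/
noncomputable def binomPoly (d j : ℕ) : Polynomial ℚ :=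
  ((d.factorial : ℚ)⁻¹) • ∏ i ∈ Finset.range d, (Polynomial.X + Polynomial.C ((d : ℚ) - j - i))

open Polynomial Finset

lemma coeff_zero_prod (s : Finset ℕ) (a : ℕ → ℚ) :
    (∏ i ∈ s, (X + C (a i))).coeff 0 = ∏ i ∈ s, a i := by
  simp [Polynomial.coeff_zero_eq_eval_zero, Polynomial.eval_prod]

lemma coeff_one_prod (s : Finset ℕ) (a : ℕ → ℚ) :
    (∏ i ∈ s, (X + C (a i))).coeff 1 = ∑ i ∈ s, ∏ i' ∈ s.erase i, a i' := by
  induction s using Finset.induction with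
  | empty => simp [Polynomial.coeff_one]
  | @insert i s hi ih =>
    rw [Finset.prod_insert hi, add_mul, Finset.sum_insert hi]
    rw [Polynomial.coeff_add, Polynomial.coeff_X_mul, Polynomial.coeff_C_mul]
    rw [_root_.coeff_zero_prod, ih, Finset.erase_insert hi, Finset.mul_sum]
    congr 1
    refine Finset.sum_congr rfl fun j hj => ?_
    rw [Finset.erase_insert_of_ne (by rintro rfl; exact hi hj)]
    rw [Finset.prod_insert (fun h => hi (Finset.mem_of_mem_erase h))]

lemma prod_range_sub_cast (k : ℕ) : ∏ i ∈ range k, ((k : ℚ) - i) = k.factorial := by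
  have h : ∏ i ∈ range k, ((k : ℚ) - i) = ∏ i ∈ range k, (((k - i : ℕ) : ℚ)) := by
    refine Finset.prod_congr rfl fun i hi => ?_
    rw [Nat.cast_sub (le_of_lt (Finset.mem_range.mp hi))]
  rw [h, ← Nat.cast_prod]
  congr 1
  rw [← Finset.prod_range_add_one_eq_factorial k, ← Finset.prod_range_reflect (fun j => j + 1) k]
  refine Finset.prod_congr rfl fun i hi => ?_
  have : i < k := Finset.mem_range.mp hi
  omega

lemma prod_erase_lin (d k : ℕ) (hk : k < d) :
    ∏ i' ∈ (range d).erase k, ((k : ℚ) - i')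
      = (-1 : ℚ)^(d - 1 - k) * k.factorial * (d - 1 - k).factorial := by
  have hset : (range d).erase k = range k ∪ Ico (k+1) d := by
    ext x; simp only [Finset.mem_erase, Finset.mem_range, Finset.mem_union, Finset.mem_Ico]; omega
  have hdisj : Disjoint (range k) (Ico (k+1) d) := by
    rw [Finset.disjoint_left]; intro x hx hx'
    simp only [Finset.mem_range] at hx; simp only [Finset.mem_Ico] at hx'; omega
  rw [hset, Finset.prod_union hdisj, prod_range_sub_cast]
  rw [Finset.prod_Ico_eq_prod_range]
  have : ∀ m ∈ range (d - (k+1)), ((k : ℚ) - (((k + 1 + m : ℕ)) : ℚ)) = -((m : ℚ) + 1) := by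
    intro m _; push_cast; ring
  rw [Finset.prod_congr rfl this]
  have heq : ∀ m ∈ range (d - (k+1)), -((m : ℚ) + 1) = (-1) * ((m : ℚ) + 1) := by
    intro m _; ring
  rw [Finset.prod_congr rfl heq, Finset.prod_mul_distrib, Finset.prod_const, Finset.card_range]
  have h2 : ∏ m ∈ range (d - (k+1)), ((m : ℚ) + 1) = (d - 1 - k).factorial := by
    rw [show d - (k+1) = d - 1 - k by omega, ← Finset.prod_range_add_one_eq_factorial]
    push_cast; rfl
  rw [h2, show d - (k+1) = d - 1 - k from by omega]
  ring

lemma sum_lt_case (d k : ℕ) (hk : k < d) :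
    ∑ i ∈ range d, ∏ i' ∈ (range d).erase i, ((k : ℚ) - i')
      = (-1 : ℚ)^(d - 1 - k) * k.factorial * (d - 1 - k).factorial := by
  rw [Finset.sum_eq_single k]
  · exact prod_erase_lin d k hk
  · intro i hi hne
    refine Finset.prod_eq_zero (Finset.mem_erase.mpr ⟨hne.symm, Finset.mem_range.mpr hk⟩) ?_
    simp
  · intro h; exact absurd (Finset.mem_range.mpr hk) h

lemma sum_d_case (d : ℕ) :
    ∑ i ∈ range d, ∏ i' ∈ (range d).erase i, (-((i' : ℚ) + 1))
      = (-1 : ℚ)^(d - 1) * d.factorial * harmonic d := by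
  have hprodall : ∏ i' ∈ range d, ((i' : ℚ) + 1) = d.factorial := by
    rw [← Finset.prod_range_add_one_eq_factorial]; push_cast; rfl
  have key : ∀ i ∈ range d, ∏ i' ∈ (range d).erase i, (-((i' : ℚ) + 1))
      = (-1 : ℚ)^(d - 1) * (d.factorial / ((i : ℚ) + 1)) := by
    intro i hi
    have hcard : ((range d).erase i).card = d - 1 := by
      rw [Finset.card_erase_of_mem hi, Finset.card_range]
    have h1 : ∏ i' ∈ (range d).erase i, (-((i' : ℚ) + 1))
        = (-1 : ℚ)^(d-1) * ∏ i' ∈ (range d).erase i, ((i' : ℚ) + 1) := by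
      rw [← hcard, ← Finset.prod_const, ← Finset.prod_mul_distrib]
      exact Finset.prod_congr rfl fun x _ => by ring
    have h2 : ((i : ℚ) + 1) * ∏ i' ∈ (range d).erase i, ((i' : ℚ) + 1) = d.factorial := by
      rw [Finset.mul_prod_erase (range d) (fun i' => ((i' : ℚ) + 1)) hi]; exact hprodall
    have hne : ((i : ℚ) + 1) ≠ 0 := by positivity
    rw [h1]
    congr 1
    field_simp at h2 ⊢
    linarith [h2]
  rw [Finset.sum_congr rfl key]
  rw [harmonic, Finset.mul_sum]
  refine Finset.sum_congr rfl fun i _ => ?_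
  push_cast
  ring

lemma binom_comp (d j : ℕ) :
    (binomPoly d j).comp (X - 1)
      = ((d.factorial : ℚ)⁻¹) • ∏ i ∈ range d, (X + C ((d : ℚ) - j - i - 1)) := by
  rw [binomPoly, Polynomial.smul_comp, Polynomial.prod_comp]
  congr 1
  refine Finset.prod_congr rfl fun i _ => ?_
  rw [Polynomial.add_comp, Polynomial.X_comp, Polynomial.C_comp]
  conv_rhs => rw [Polynomial.C_sub, Polynomial.C_1]
  ring

lemma coeff_binom_lt (d j : ℕ) (hj : j < d) :
    ((binomPoly d j).comp (X - 1)).coeff 1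
      = (-1 : ℚ)^j / (d * ((d - 1).choose j : ℚ)) := by
  set k := d - 1 - j with hk
  have hkd : k < d := by omega
  have hcast : ((k : ℕ) : ℚ) = (d : ℚ) - 1 - j := by
    rw [hk, Nat.cast_sub (by omega), Nat.cast_sub (by omega)]; push_cast; ring
  rw [binom_comp, Polynomial.coeff_smul]
  rw [show (∏ i ∈ range d, (X + C ((d : ℚ) - j - i - 1)))
      = ∏ i ∈ range d, (X + C (((fun i : ℕ => (k : ℚ) - i)) i)) from
    Finset.prod_congr rfl fun i _ => by rw [hcast]; ring_nf]
  rw [coeff_one_prod, sum_lt_case d k hkd]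
  have hj' : d - 1 - k = j := by omega
  rw [hj']
  have hch : ((d - 1).choose j : ℚ) * j.factorial * (d - 1 - j).factorial
      = (d - 1).factorial := by
    exact_mod_cast congrArg (Nat.cast : ℕ → ℚ)
      (Nat.choose_mul_factorial_mul_factorial (by omega : j ≤ d - 1))
  have hdf : (d.factorial : ℚ) = d * (d - 1).factorial := by
    rw [show d = (d - 1) + 1 from by omega, Nat.factorial_succ]
    push_cast
    ring
  have hne1 : (d.factorial : ℚ) ≠ 0 := Nat.cast_ne_zero.mpr d.factorial_pos.ne'
  have hne2 : ((d - 1).choose j : ℚ) ≠ 0 :=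
    Nat.cast_ne_zero.mpr (Nat.choose_pos (by omega : j ≤ d - 1)).ne'
  have hned : (d : ℚ) ≠ 0 := Nat.cast_ne_zero.mpr (by omega)
  have hkk : (k.factorial : ℚ) = ((d - 1 - j).factorial : ℚ) := by rw [hk]
  rw [smul_eq_mul, hkk]
  field_simp
  rw [hdf]
  linear_combination (d : ℚ) * hch

lemma coeff_binom_d (d : ℕ) :
    ((binomPoly d d).comp (X - 1)).coeff 1 = (-1 : ℚ)^(d - 1) * harmonic d := by
  rw [binom_comp, Polynomial.coeff_smul]
  rw [show (∏ i ∈ range d, (X + C ((d : ℚ) - d - i - 1)))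
      = ∏ i ∈ range d, (X + C (((fun i : ℕ => -((i : ℚ) + 1))) i)) from
    Finset.prod_congr rfl fun i _ => by ring_nf]
  rw [coeff_one_prod, sum_d_case d]
  have hne1 : (d.factorial : ℚ) ≠ 0 := Nat.cast_ne_zero.mpr d.factorial_pos.ne'
  rw [smul_eq_mul]
  field_simp

theorem stmt_6 (d : ℕ) (hd : 0 < d) (p : Polynomial ℚ) (hstar : ℕ → ℚ)
    (hp : p = ∑ j ∈ Finset.range (d + 1), Polynomial.C (hstar j) * binomPoly d j) :
    (p.comp (Polynomial.X - 1)).coeff 1 =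
      (-1 : ℚ) ^ (d - 1) * hstar d * harmonic d +
        (1 / (d : ℚ)) * ∑ j ∈ Finset.range d, (-1 : ℚ) ^ j * hstar j / ((d - 1).choose j : ℚ) := by
  subst hp
  rw [Polynomial.sum_comp, Polynomial.finset_sum_coeff]
  have hterm : ∀ j, ((Polynomial.C (hstar j) * binomPoly d j).comp (X - 1)).coeff 1
      = hstar j * ((binomPoly d j).comp (X - 1)).coeff 1 := by
    intro j
    rw [Polynomial.mul_comp, Polynomial.C_comp, Polynomial.coeff_C_mul]
  simp only [hterm]
  rw [Finset.sum_range_succ, coeff_binom_d d]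
  rw [Finset.sum_congr rfl fun j hj => by
    rw [coeff_binom_lt d j (Finset.mem_range.mp hj)]]
  rw [Finset.mul_sum]
  have : ∀ j ∈ range d, hstar j * ((-1 : ℚ)^j / (d * ((d - 1).choose j : ℚ)))
      = 1 / (d : ℚ) * ((-1 : ℚ)^j * hstar j / ((d - 1).choose j : ℚ)) := by
    intro j hj; field_simp
  rw [Finset.sum_congr rfl this]
  ring
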